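/- Let A, P be symmetric positive definite n×n real matrices with (1 − ε)·P⁻¹ ⪯ A ⪯ P⁻¹ for some ε ∈ (0,1). Then for every k > 0, the matrix P_k = Σ_{i=0}^{k} P(I − AP)^i is symmetric and satisfies (1 − ε^{k+1}/(1 − ε))·A⁻¹ ⪯ P_k ⪯ A⁻¹. -/

import Mathlib

open Matrix

namespace RichardsonAux

variable {n : Type*} [Fintype n] [DecidableEq n]

lemma mul_cancel_left {S Si : Matrix n n ℝ} (h : Si * S = 1) (X : Matrix n n ℝ) :
    Si * (S * X) = X := by
  rw [← Matrix.mul_assoc, h, Matrix.one_mul]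

lemma conj_pow (S Si C : Matrix n n ℝ) (h : Si * S = 1) (h' : S * Si = 1) (m : ℕ) :
    (S * C * Si) ^ m = S * C ^ m * Si := by
  induction m with
  | zero => simp [h']
  | succ m ih =>
      rw [pow_succ, ih, pow_succ]
      simp only [Matrix.mul_assoc, mul_cancel_left h]

lemma conj_diag_mul (U : Matrix n n ℝ) (hU : star U * U = 1) (f g : n → ℝ) :
    (U * diagonal f * star U) * (U * diagonal g * star U) = U * diagonal (f * g) * star U := by
  simp only [Matrix.mul_assoc, mul_cancel_left hU]
  rw [← Matrix.mul_assoc (diagonal f) (diagonal g), Matrix.diagonal_mul_diagonal]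
  rfl

lemma conj_diag_pow (U : Matrix n n ℝ) (hU : star U * U = 1) (hU' : U * star U = 1)
    (f : n → ℝ) (m : ℕ) :
    (U * diagonal f * star U) ^ m = U * diagonal (f ^ m) * star U := by
  induction m with
  | zero =>
      have h1 : diagonal (1 : n → ℝ) = (1 : Matrix n n ℝ) := Matrix.diagonal_one
      rw [pow_zero, pow_zero, h1, Matrix.mul_one, hU']
  | succ m ih =>
      rw [pow_succ, ih, conj_diag_mul U hU, ← pow_succ]

lemma psd_conj_iff (U : Matrix n n ℝ) (hU : star U * U = 1) (f : n → ℝ) :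
    (U * diagonal f * star U).PosSemidef ↔ ∀ i, 0 ≤ f i := by
  constructor
  · intro h
    have h2 := h.conjTranspose_mul_mul_same U
    rw [← Matrix.star_eq_conjTranspose] at h2
    have e : star U * (U * diagonal f * star U) * U = diagonal f := by
      simp only [Matrix.mul_assoc, hU, Matrix.mul_one, mul_cancel_left hU]
    rw [e] at h2
    exact fun i => Matrix.posSemidef_diagonal_iff.mp h2 i
  · intro h
    have := (Matrix.posSemidef_diagonal_iff.mpr h).mul_mul_conjTranspose_same U
    rwa [← Matrix.star_eq_conjTranspose] at this

end RichardsonAux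


open scoped MatrixOrder Matrix.Norms.L2Operator in
lemma RichardsonAux.exists_sqrt {n : ℕ} {A : Matrix (Fin n) (Fin n) ℝ} (hA : A.PosSemidef) :
    ∃ S : Matrix (Fin n) (Fin n) ℝ, S.PosSemidef ∧ S * S = A :=
  ⟨CFC.sqrt A, (CFC.sqrt_nonneg A).posSemidef, CFC.sqrt_mul_sqrt_self A hA.nonneg⟩

open RichardsonAux in
set_option maxHeartbeats 1000000 in
/-- Preconditioned Richardson iteration: if (1−ε)P⁻¹ ⪯ A ⪯ P⁻¹ for symmetric positive
definite A, P and ε ∈ (0,1), then P_k = Σ_{i=0}^{k} P(I − AP)^i is symmetric and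
(1 − ε^{k+1}/(1−ε))·A⁻¹ ⪯ P_k ⪯ A⁻¹. -/
theorem richardson_iteration {n : ℕ} (A P : Matrix (Fin n) (Fin n) ℝ) (ε : ℝ) (k : ℕ)
    (hA : A.PosDef) (hP : P.PosDef) (hε : 0 < ε) (hε1 : ε < 1) (hk : 0 < k)
    (h1 : (P⁻¹ - A).PosSemidef)
    (h2 : (A - (1 - ε) • P⁻¹).PosSemidef) :
    let Pk : Matrix (Fin n) (Fin n) ℝ := ∑ i ∈ Finset.range (k + 1), P * (1 - A * P) ^ i
    Pkᵀ = Pk ∧ (A⁻¹ - Pk).PosSemidef ∧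
      (Pk - (1 - ε ^ (k + 1) / (1 - ε)) • A⁻¹).PosSemidef := by
  intro Pk
  have hPkdef : Pk = ∑ i ∈ Finset.range (k + 1), P * (1 - A * P) ^ i := rfl
  set c : ℝ := ε ^ (k + 1) / (1 - ε) with hcdef
  -- the square root of A
  obtain ⟨S, hSpsd, hSS⟩ : ∃ S : Matrix (Fin n) (Fin n) ℝ, S.PosSemidef ∧ S * S = A :=
    RichardsonAux.exists_sqrt hA.posSemidef
  have hSH : S.IsHermitian := hSpsd.isHermitian
  have hAdet : IsUnit A.det := hA.det_pos.ne'.isUnit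
  have hPdet : IsUnit P.det := hP.det_pos.ne'.isUnit
  have hSdet : IsUnit S.det := by
    have h : IsUnit (S.det * S.det) := by rw [← Matrix.det_mul, hSS]; exact hAdet
    exact isUnit_of_mul_isUnit_left h
  have hSi : S⁻¹ * S = 1 := Matrix.nonsing_inv_mul _ hSdet
  have hSi' : S * S⁻¹ = 1 := Matrix.mul_nonsing_inv _ hSdet
  have hSiH : (S⁻¹).IsHermitian := hSH.inv
  have hAinv : A⁻¹ = S⁻¹ * S⁻¹ := by rw [← hSS, Matrix.mul_inv_rev]
  -- the matrix D = S P S and its spectral decomposition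
  set D : Matrix (Fin n) (Fin n) ℝ := S * P * S with hDdef
  have hST : Sᵀ = S := by
    rw [← Matrix.conjTranspose_eq_transpose_of_trivial]; exact hSH
  have hDpsd : D.PosSemidef := by
    rw [hDdef]
    simpa [hST] using hP.posSemidef.mul_mul_conjTranspose_same S
  have hDH : D.IsHermitian := hDpsd.isHermitian
  obtain ⟨U, μ, hU, hU', hDspec⟩ : ∃ (U : Matrix (Fin n) (Fin n) ℝ) (μ : Fin n → ℝ),
      star U * U = 1 ∧ U * star U = 1 ∧ D = U * diagonal μ * star U := by
    refine ⟨(hDH.eigenvectorUnitary : Matrix (Fin n) (Fin n) ℝ), hDH.eigenvalues,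
      hDH.eigenvectorUnitary.prop.1, hDH.eigenvectorUnitary.prop.2, ?_⟩
    have h := hDH.spectral_theorem
    rwa [RCLike.ofReal_real_eq_id, Function.id_comp] at h
  -- eigenvalues of D are positive
  have hdetD : D.det ≠ 0 := by
    have h : D.det = S.det * P.det * S.det := by rw [hDdef, Matrix.det_mul, Matrix.det_mul]
    rw [h]
    exact mul_ne_zero (mul_ne_zero hSdet.ne_zero hP.det_pos.ne') hSdet.ne_zero
  have hμ0 : ∀ i, 0 ≤ μ i := (psd_conj_iff U hU μ).mp (hDspec ▸ hDpsd)
  have hμpos : ∀ i, 0 < μ i := by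
    have h2 : U.det * (star U).det = 1 := by rw [← Matrix.det_mul, hU', Matrix.det_one]
    have h3 : D.det = (U.det * (star U).det) * ∏ i, μ i := by
      rw [hDspec, Matrix.det_mul, Matrix.det_mul, Matrix.det_diagonal]; ring
    rw [h2, one_mul] at h3
    intro i
    refine lt_of_le_of_ne (hμ0 i) (Ne.symm ?_)
    exact Finset.prod_ne_zero_iff.mp (h3 ▸ hdetD) i (Finset.mem_univ i)
  -- transfer the two Loewner hypotheses to D
  have key1 : (D - D * D).PosSemidef := by
    have hc2 := h1.mul_mul_conjTranspose_same (S * P)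
    have he : (S * P) * (P⁻¹ - A) * (S * P)ᴴ = D - D * D := by
      rw [Matrix.conjTranspose_mul, hSH.eq, hP.isHermitian.eq, Matrix.mul_sub, Matrix.sub_mul,
        hDdef, ← hSS]
      congr 1
      · simp only [Matrix.mul_assoc]
        rw [Matrix.nonsing_inv_mul_cancel_left _ _ hPdet]
      · simp only [Matrix.mul_assoc]
    rwa [he] at hc2
  have key2 : (D * D - (1 - ε) • D).PosSemidef := by
    have hc2 := h2.mul_mul_conjTranspose_same (S * P)
    have he : (S * P) * (A - (1 - ε) • P⁻¹) * (S * P)ᴴ = D * D - (1 - ε) • D := by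
      rw [Matrix.conjTranspose_mul, hSH.eq, hP.isHermitian.eq, Matrix.mul_sub, Matrix.sub_mul,
        hDdef, ← hSS]
      congr 1
      · simp only [Matrix.mul_assoc]
      · rw [mul_smul_comm, smul_mul_assoc]
        congr 1
        simp only [Matrix.mul_assoc]
        rw [Matrix.nonsing_inv_mul_cancel_left _ _ hPdet]
    rwa [he] at hc2
  -- eigenvalue bounds: 1 - ε ≤ μ i ≤ 1
  have hDD : D * D = U * diagonal (μ * μ) * star U := by
    rw [hDspec, conj_diag_mul U hU]
  have hμle1 : ∀ i, μ i ≤ 1 := by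
    intro i
    have he : D - D * D = U * diagonal (fun j => μ j - μ j * μ j) * star U := by
      rw [hDD, hDspec, ← Matrix.sub_mul, ← Matrix.mul_sub, ← Matrix.diagonal_sub]
      congr 2
    have h := (psd_conj_iff U hU _).mp (he ▸ key1) i
    nlinarith [hμpos i]
  have hμge : ∀ i, 1 - ε ≤ μ i := by
    intro i
    have hsm : (1 - ε) • (U * diagonal μ * star U)
        = U * diagonal (fun j => (1 - ε) * μ j) * star U := by
      have hμs : (fun j => (1 - ε) * μ j) = (1 - ε) • μ := by funext j; simp
      rw [hμs, Matrix.diagonal_smul, mul_smul_comm, smul_mul_assoc]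
    have he : D * D - (1 - ε) • D
        = U * diagonal (fun j => μ j * μ j - (1 - ε) * μ j) * star U := by
      rw [hDD, hDspec, hsm, ← Matrix.sub_mul, ← Matrix.mul_sub, ← Matrix.diagonal_sub]
      congr 2
    have h := (psd_conj_iff U hU _).mp (he ▸ key2) i
    nlinarith [hμpos i]
  -- the function g i = 1 - μ i satisfies 0 ≤ g ≤ ε
  set g : Fin n → ℝ := fun i => 1 - μ i with hgdef
  have hg0 : ∀ i, 0 ≤ g i := by
    intro i
    have := hμle1 i
    simp only [hgdef]
    linarith
  have hgε : ∀ i, g i ≤ ε := by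
    intro i
    have := hμge i
    simp only [hgdef]
    linarith
  have hgpow : ∀ i, 0 ≤ (g ^ (k + 1)) i := by
    intro i
    rw [Pi.pow_apply]
    exact pow_nonneg (hg0 i) _
  -- the key identity for Pk
  have hAPk : A * Pk = 1 - (1 - A * P) ^ (k + 1) := by
    rw [hPkdef, Finset.mul_sum]
    have hterm : ∀ i, A * (P * (1 - A * P) ^ i) =
        (1 - A * P) ^ i - (1 - A * P) ^ (i + 1) := by
      intro i
      rw [pow_succ' (1 - A * P) i, Matrix.sub_mul, Matrix.one_mul, ← Matrix.mul_assoc]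
      abel
    rw [Finset.sum_congr rfl fun i _ => hterm i,
      Finset.sum_range_sub' (fun i => (1 - A * P) ^ i)]
    simp
  have hC : 1 - A * P = S * (1 - D) * S⁻¹ := by
    rw [Matrix.mul_sub, Matrix.mul_one, Matrix.sub_mul, hSi']
    congr 1
    rw [hDdef, ← hSS]
    simp only [Matrix.mul_assoc, hSi', Matrix.mul_one]
  have hCspec : (1 : Matrix (Fin n) (Fin n) ℝ) - D = U * diagonal g * star U := by
    rw [hDspec]
    have h1' : (1 : Matrix (Fin n) (Fin n) ℝ) = U * diagonal (fun _ => (1:ℝ)) * star U := by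
      rw [Matrix.diagonal_one, Matrix.mul_one, hU']
    rw [h1', ← Matrix.sub_mul, ← Matrix.mul_sub, ← Matrix.diagonal_sub]
  have hPkEq : Pk = A⁻¹ - S⁻¹ * (U * diagonal (g ^ (k + 1)) * star U) * S⁻¹ := by
    have h0 : Pk = A⁻¹ * (A * Pk) := (Matrix.nonsing_inv_mul_cancel_left _ Pk hAdet).symm
    rw [h0, hAPk, Matrix.mul_sub, Matrix.mul_one, hC,
      conj_pow S S⁻¹ (1 - D) hSi hSi', hCspec, conj_diag_pow U hU hU']
    congr 1
    rw [hAinv]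
    simp only [Matrix.mul_assoc, mul_cancel_left hSi]
  -- conjugated diagonal matrices with nonnegative entries are PSD
  have hconjpsd : ∀ f : Fin n → ℝ, (∀ i, 0 ≤ f i) →
      (S⁻¹ * (U * diagonal f * star U) * S⁻¹).PosSemidef := by
    intro f hf
    have h := ((psd_conj_iff U hU f).mpr hf).mul_mul_conjTranspose_same S⁻¹
    rwa [hSiH.eq] at h
  have hermT : ∀ X : Matrix (Fin n) (Fin n) ℝ, X.IsHermitian → Xᵀ = X := by
    intro X h
    rw [← Matrix.conjTranspose_eq_transpose_of_trivial]
    exact h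
  have hMpsd := hconjpsd (g ^ (k + 1)) hgpow
  refine ⟨?_, ?_, ?_⟩
  · rw [hPkEq, Matrix.transpose_sub, hermT _ hA.isHermitian.inv, hermT _ hMpsd.isHermitian]
  · rw [hPkEq, sub_sub_cancel]
    exact hMpsd
  · have hδ : ∀ i, (g ^ (k + 1)) i ≤ c := by
      intro i
      have ha : g i ^ (k + 1) ≤ ε ^ (k + 1) := pow_le_pow_left₀ (hg0 i) (hgε i) _
      have hb : ε ^ (k + 1) ≤ c := by
        rw [hcdef]
        exact le_div_self (pow_nonneg hε.le _) (by linarith) (by linarith)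
      rw [Pi.pow_apply]
      exact ha.trans hb
    have hsplit : S⁻¹ * (U * diagonal (fun i => c - (g ^ (k + 1)) i) * star U) * S⁻¹
        = c • A⁻¹ - S⁻¹ * (U * diagonal (g ^ (k + 1)) * star U) * S⁻¹ := by
      have hdc : diagonal (fun _ : Fin n => c) = c • (1 : Matrix (Fin n) (Fin n) ℝ) := by
        ext i j
        by_cases h : i = j <;> simp [Matrix.diagonal_apply, Matrix.one_apply, h]
      have hd : diagonal (fun i : Fin n => c - (g ^ (k + 1)) i)
          = c • (1 : Matrix (Fin n) (Fin n) ℝ) - diagonal (g ^ (k + 1)) := by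
        rw [← hdc, ← Matrix.diagonal_sub]
      rw [hd, Matrix.mul_sub, Matrix.sub_mul, Matrix.mul_sub, Matrix.sub_mul]
      congr 1
      simp only [mul_smul_comm, smul_mul_assoc, Matrix.mul_one, hU', hAinv]
    have heq3 : Pk - (1 - c) • A⁻¹
        = S⁻¹ * (U * diagonal (fun i => c - (g ^ (k + 1)) i) * star U) * S⁻¹ := by
      rw [hsplit, hPkEq, sub_smul, one_smul]
      abel
    rw [heq3]
    exact hconjpsd _ fun i => sub_nonneg.mpr (hδ i)
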